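/- Let w be a pp-irreducible string and c a position that is the center of a nonempty suffix palindrome of w, i.e., ρ_w(c) ≥ 1 and c + ρ_w(c) = |w|. Then w is ss-reducible (i.e., reducible) if and only if ρ_w(c − ρ_w(c)) ≥ ρ_w(c). -/

import Mathlib

/-!
Common definitions: strings as `List α` over an alphabet `α`, 1-based positions.
-/

variable {α : Type*}

/-- The substring `w[i:j]` (1-based, inclusive; empty when `j < i`). -/
def seg (w : List α) (i j : ℕ) : List α := (w.take j).drop (i - 1)

/-- `w` has an even palindrome of radius `r` centered at position `c`:
`r ≤ c`, `c + r ≤ |w|` and `w[c−k+1] = w[c+k]` for all `1 ≤ k ≤ r`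
(here expressed with 0-based list indexing: `w[c−k]? = w[c+k−1]?`). -/
def PalAt (w : List α) (c r : ℕ) : Prop :=
  r ≤ c ∧ c + r ≤ w.length ∧ ∀ k, 1 ≤ k → k ≤ r → w[c - k]? = w[c + k - 1]?

/-- `ρ_w(c)`: the maximal even-palindrome radius at center `c`. -/
noncomputable def rho (w : List α) (c : ℕ) : ℕ := sSup {r | PalAt w c r}

/-- The reduction relation: `x y yᴿ y z → x y z` for nonempty `y`. -/
def Reduces (w w' : List α) : Prop :=
  ∃ x y z : List α, y ≠ [] ∧ w = x ++ y ++ y.reverse ++ y ++ z ∧ w' = x ++ y ++ z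

/-- A string is irreducible if no reduction applies to it. -/
def ZIrreducible (w : List α) : Prop := ∀ w', ¬ Reduces w w'

def ZReducible (w : List α) : Prop := ∃ w', Reduces w w'

/-- `w` is pp-irreducible if its longest proper prefix `w[1:|w|−1]` is irreducible. -/
def PPIrreducible (w : List α) : Prop := ZIrreducible w.dropLast

/-- `w` is ss-reducible if it is reducible and pp-irreducible. -/
def SSReducible (w : List α) : Prop := ZReducible w ∧ PPIrreducible w

/-- A Z-shape occurrence `⟨p1, p2⟩` in `w`: with `s = p2 − p1 ≥ 1`, `p1 − s ≥ 0`,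
`p2 + s ≤ |w|` and `w[p1−s+1 : p2+s] = x xᴿ x` where `x = w[p1−s+1 : p1]`. -/
def ZOcc (w : List α) (p1 p2 : ℕ) : Prop :=
  p1 < p2 ∧ p2 - p1 ≤ p1 ∧ p2 + (p2 - p1) ≤ w.length ∧
    seg w (p1 - (p2 - p1) + 1) (p2 + (p2 - p1)) =
      seg w (p1 - (p2 - p1) + 1) p1 ++ (seg w (p1 - (p2 - p1) + 1) p1).reverse ++
        seg w (p1 - (p2 - p1) + 1) p1

/-- `c ⊏_w d` : `c ≤ d − ρ_w(d) ≤ d ≤ c + ρ_w(c) ≤ d + ρ_w(d)` with `c ≠ d`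
(written without truncated subtraction). -/
def Sqsub (w : List α) (c d : ℕ) : Prop :=
  c < d ∧ c + rho w d ≤ d ∧ d ≤ c + rho w c ∧ c + rho w c ≤ d + rho w d

/-- `𝓕_w(c)`: the maximum frontier over all palindrome chains from `c`
(a palindrome chain is a nonempty list starting at `c` whose consecutive
elements are related by `⊏_w`; its frontier is `e + ρ_w(e)` for its last element `e`). -/
noncomputable def maxFrontier (w : List α) (c : ℕ) : ℕ :=
  sSup {f | ∃ l : List ℕ, l.head? = some c ∧ l.Chain' (Sqsub w) ∧
      ∃ e, l.getLast? = some e ∧ f = e + rho w e}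

/-- `𝓐_w(d)`: the smallest position `c` with `c ≤ d ≤ 𝓕_w(c)`. -/
noncomputable def originator (w : List α) (d : ℕ) : ℕ :=
  sInf {c | 1 ≤ c ∧ c ≤ d ∧ d ≤ maxFrontier w c}

/-- A position `c` of a pp-irreducible string `w` is stable if `𝓕_w(c) < |w|`. -/
def Stable (w : List α) (c : ℕ) : Prop := maxFrontier w c < w.length

/-- `c` is strongly stable if every position in `[1:c]` is stable. -/
def StronglyStable (w : List α) (c : ℕ) : Prop := ∀ e, 1 ≤ e → e ≤ c → Stable w e

/-- `T` is the output of an end-to-end walk on the path graph labeled `u`: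
there are vertices `p 0 = 0, …, p |T| = |u|`, each `≤ |u|`, consecutive ones
adjacent, and `T[i] = u[max (p (i−1)) (p i)]` (1-based; here 0-based indexing). -/
def EndToEndWalkOutput (u T : List α) : Prop :=
  ∃ p : ℕ → ℕ, p 0 = 0 ∧ p T.length = u.length ∧
    (∀ i, i ≤ T.length → p i ≤ u.length) ∧
    (∀ i, i < T.length → p (i + 1) = p i + 1 ∨ p i = p (i + 1) + 1) ∧
    (∀ i, i < T.length → T[i]? = u[max (p i) (p (i + 1)) - 1]?)

/-- `P` is accurate enough between `a` and `b`:
`min (P e) (b − e) = min (ρ_w e) (b − e)` for all `e ∈ [a:b]`. -/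
def AccEnough (w : List α) (P : ℕ → ℕ) (a b : ℕ) : Prop :=
  ∀ e, a ≤ e → e ≤ b → min (P e) (b - e) = min (rho w e) (b - e)

open Classical in
/-- `ν_w(c)`: the largest `e` with `e ⊏_w c`, or `1` if there is none. -/
noncomputable def nu (w : List α) (c : ℕ) : ℕ :=
  if ∃ e, Sqsub w e c then sSup {e | Sqsub w e c} else 1

/-- `c` is left-good w.r.t. `P` if `P` is accurate enough between `ν_w(c)` and `c`. -/
def LeftGood (w : List α) (P : ℕ → ℕ) (c : ℕ) : Prop := AccEnough w P (nu w c) c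

/-- `c` is right-good w.r.t. `P` if `P` is accurate enough between `c` and `c + ρ_w(c)`. -/
def RightGood (w : List α) (P : ℕ → ℕ) (c : ℕ) : Prop := AccEnough w P c (c + rho w c)

section Aux

lemma palAt_mono {w : List α} {c r r' : ℕ} (h : PalAt w c r) (h' : r' ≤ r) : PalAt w c r' :=
  ⟨le_trans h' h.1, by have := h.2.1; omega, fun k hk1 hk2 => h.2.2 k hk1 (le_trans hk2 h')⟩

lemma palAt_rho {w : List α} {c : ℕ} (hc : c ≤ w.length) : PalAt w c (rho w c) := by
  have h0 : PalAt w c 0 := ⟨Nat.zero_le _, by omega, fun k hk1 hk2 => by omega⟩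
  exact Nat.sSup_mem (s := {r | PalAt w c r}) ⟨0, h0⟩ ⟨c, fun x hx => hx.1⟩

lemma rho_ge {w : List α} {c r : ℕ} (h : PalAt w c r) : r ≤ rho w c :=
  le_csSup ⟨c, fun x hx => hx.1⟩ h

lemma palAt_of_le_rho {w : List α} {c r : ℕ} (hr : 1 ≤ r) (h : r ≤ rho w c) : PalAt w c r := by
  have hne : {r | PalAt w c r}.Nonempty := by
    by_contra hemp
    rw [Set.not_nonempty_iff_eq_empty] at hemp
    rw [rho, hemp, csSup_empty, show (⊥ : ℕ) = 0 from rfl] at h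
    omega
  exact palAt_mono (Nat.sSup_mem hne ⟨c, fun x hx => hx.1⟩) h

lemma palAt_mirror {w : List α} {c r : ℕ} (h : PalAt w c r) {i j : ℕ}
    (hij : i + j + 1 = 2 * c) (hi : c ≤ i + r) (hj : c ≤ j + r) : w[i]? = w[j]? := by
  have hrc : r ≤ c := h.1
  rcases le_or_gt c j with hcj | hcj
  · have := h.2.2 (j - c + 1) (by omega) (by omega)
    rw [show c - (j - c + 1) = i by omega, show c + (j - c + 1) - 1 = j by omega] at this
    exact this
  · have hci : c ≤ i := by omega
    have := h.2.2 (i - c + 1) (by omega) (by omega)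
    rw [show c - (i - c + 1) = j by omega, show c + (i - c + 1) - 1 = i by omega] at this
    exact this.symm

lemma getElem?_dropLast_eq {w : List α} {i : ℕ} (h : i + 1 < w.length) :
    w.dropLast[i]? = w[i]? := by
  rw [List.getElem?_dropLast, if_pos (by omega)]

lemma reduces_of_indices (w : List α) (m t : ℕ) (ht : 1 ≤ t) (hmt : m + 3 * t ≤ w.length)
    (h1 : ∀ j, j < t → w[m + t + j]? = w[m + t - 1 - j]?)
    (h2 : ∀ j, j < t → w[m + 2 * t + j]? = w[m + j]?) : ZReducible w := by
  have hseg : ∀ a j : ℕ, j < t → ((w.drop a).take t)[j]? = w[a + j]? := by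
    intro a j hj
    rw [List.getElem?_take_of_lt hj, List.getElem?_drop]
  have hlen : ∀ a : ℕ, a + t ≤ w.length → ((w.drop a).take t).length = t := by
    intro a ha; simp; omega
  set y := (w.drop m).take t with hy
  have hyl : y.length = t := hlen m (by omega)
  have hy2 : (w.drop (m + t)).take t = y.reverse := by
    apply List.ext_getElem?
    intro i
    rcases lt_or_ge i t with hi | hi
    · rw [hseg _ i hi, List.getElem?_reverse (by omega), hyl, hy, hseg m _ (by omega),
        show m + (t - 1 - i) = m + t - 1 - i by omega]
      exact h1 i hi
    · rw [List.getElem?_eq_none (by rw [hlen _ (by omega)]; omega),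
        List.getElem?_eq_none (by rw [List.length_reverse, hyl]; omega)]
  have hy3 : (w.drop (m + 2 * t)).take t = y := by
    apply List.ext_getElem?
    intro i
    rcases lt_or_ge i t with hi | hi
    · rw [hseg _ i hi, hy, hseg m _ hi]
      exact h2 i hi
    · rw [List.getElem?_eq_none (by rw [hlen _ (by omega)]; omega),
        List.getElem?_eq_none (by rw [hyl]; omega)]
  have step : ∀ a : ℕ, w.drop a = (w.drop a).take t ++ w.drop (a + t) := by
    intro a
    conv_lhs => rw [← List.take_append_drop t (w.drop a)]
    rw [List.drop_drop]
  have hdecomp0 : w = w.take m ++ ((w.drop m).take t ++ ((w.drop (m + t)).take t ++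
      ((w.drop (m + 2 * t)).take t ++ w.drop (m + 3 * t)))) := by
    rw [show m + 3 * t = m + 2 * t + t by ring, ← step (m + 2 * t),
      show m + 2 * t = m + t + t by ring, ← step (m + t), ← step m,
      List.take_append_drop]
  have hdecomp : w = w.take m ++ (y ++ (y.reverse ++ (y ++ w.drop (m + 3 * t)))) := by
    conv_lhs => rw [hdecomp0]
    rw [hy2, hy3, ← hy]
  refine ⟨w.take m ++ y ++ w.drop (m + 3 * t), w.take m, y, w.drop (m + 3 * t), ?_, ?_, rfl⟩
  · intro h
    rw [h] at hyl
    simp at hyl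
    omega
  · simpa [List.append_assoc] using hdecomp

lemma getBlockR {u v : List α} (j : ℕ) : (u ++ v)[u.length + j]? = v[j]? := by
  rw [List.getElem?_append_right (Nat.le_add_right _ _), Nat.add_sub_cancel_left]

lemma exists_suffix_of_reducible {w : List α} (h : ZReducible w) (hpp : PPIrreducible w) :
    ∃ x y : List α, y ≠ [] ∧ w = x ++ y ++ y.reverse ++ y := by
  obtain ⟨w', x, y, z, hy, hw, -⟩ := h
  rcases eq_or_ne z [] with rfl | hz
  · exact ⟨x, y, hy, by simpa using hw⟩
  · exact absurd ⟨x, y, z.dropLast, hy, by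
      rw [hw, List.dropLast_append_of_ne_nil hz], rfl⟩ (hpp (x ++ y ++ z.dropLast))

end Aux

/-- for a pp-irreducible `w` with a nonempty suffix palindrome centered
at `c` (`ρ_w(c) ≥ 1`, `c + ρ_w(c) = |w|`), `w` is ss-reducible iff
`ρ_w(c − ρ_w(c)) ≥ ρ_w(c)`. -/
theorem ssReducible_iff_radius (w : List α) (hpp : PPIrreducible w) (c : ℕ)
    (hr : 1 ≤ rho w c) (hsuf : c + rho w c = w.length) :
    SSReducible w ↔ rho w c ≤ rho w (c - rho w c) := by
  have hcn : c ≤ w.length := by omega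
  set r := rho w c with hrdef
  have hP : PalAt w c r := palAt_rho hcn
  have hrc : r ≤ c := hP.1
  set n := w.length with hndef
  constructor
  · rintro ⟨hred, -⟩
    obtain ⟨x, y, hy, hw⟩ := exists_suffix_of_reducible hred hpp
    set s := y.length with hsdef
    have hs : 1 ≤ s := by
      rcases y with - | ⟨a, y'⟩
      · exact absurd rfl hy
      · simp [hsdef]
    have hxlen : n = x.length + 3 * s := by
      rw [hndef, hw]; simp; omega
    have hA : ∀ j, j < s → w[n - 3 * s + j]? = y[j]? := by
      intro j hj
      rw [show n - 3 * s + j = x.length + j by omega, hw, List.append_assoc,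
        List.append_assoc, getBlockR, List.getElem?_append_left (by omega)]
    have hB : ∀ j, j < s → w[n - 2 * s + j]? = y.reverse[j]? := by
      intro j hj
      rw [show n - 2 * s + j = x.length + (y.length + j) by omega, hw, List.append_assoc,
        List.append_assoc, getBlockR, getBlockR,
        List.getElem?_append_left (by rw [List.length_reverse]; omega)]
    have hC : ∀ j, j < s → w[n - s + j]? = y[j]? := by
      intro j hj
      rw [show n - s + j = x.length + (y.length + (y.reverse.length + j)) by
          rw [List.length_reverse]; omega,
        hw, List.append_assoc, List.append_assoc, getBlockR, getBlockR, getBlockR]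
    have hu1 : ∀ j, j < s → w[n - 3 * s + j]? = w[n - s + j]? :=
      fun j hj => (hA j hj).trans (hC j hj).symm
    have hpd : PalAt w (n - s) s := by
      refine ⟨by omega, by omega, fun k hk1 hk2 => ?_⟩
      have e1 : w[n - 2 * s + (s - k)]? = y.reverse[s - k]? := hB _ (by omega)
      rw [List.getElem?_reverse (by omega),
        show y.length - 1 - (s - k) = k - 1 by omega] at e1
      have e2 : w[n - s + (k - 1)]? = y[k - 1]? := hC _ (by omega)
      rw [show n - s - k = n - 2 * s + (s - k) by omega,
        show n - s + k - 1 = n - s + (k - 1) by omega, e1, e2]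
    have hdl : w.dropLast.length = n - 1 := by rw [List.length_dropLast]
    rcases lt_trichotomy r s with hlt | heq | hgt
    · -- r < s : contradiction
      exfalso
      have H1 : ∀ j, j < r →
          w.dropLast[n - 2 * s - r + r + j]? = w.dropLast[n - 2 * s - r + r - 1 - j]? := by
        intro j hj
        rw [show n - 2 * s - r + r + j = n - 2 * s + j by omega,
          show n - 2 * s - r + r - 1 - j = n - 2 * s - 1 - j by omega,
          getElem?_dropLast_eq (by omega), getElem?_dropLast_eq (by omega)]
        have L : w[n - 2 * s + j]? = w[n - 1 - j]? :=
          palAt_mirror hpd (by omega) (by omega) (by omega)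
        have R : w[n - 3 * s + (s - 1 - j)]? = w[n - s + (s - 1 - j)]? := hu1 _ (by omega)
        rw [show n - 3 * s + (s - 1 - j) = n - 2 * s - 1 - j by omega,
          show n - s + (s - 1 - j) = n - 1 - j by omega] at R
        rw [L, R]
      have H2 : ∀ j, j < r →
          w.dropLast[n - 2 * s - r + 2 * r + j]? = w.dropLast[n - 2 * s - r + j]? := by
        intro j hj
        rw [show n - 2 * s - r + 2 * r + j = n - 2 * s + r + j by omega,
          getElem?_dropLast_eq (by omega), getElem?_dropLast_eq (by omega)]
        have L1 : w[n - 2 * s + r + j]? = w[n - 1 - r - j]? :=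
          palAt_mirror hpd (by omega) (by omega) (by omega)
        have L2 : w[n - 1 - r - j]? = w[n - r + j]? :=
          palAt_mirror hP (by omega) (by omega) (by omega)
        have R : w[n - 3 * s + (s - r + j)]? = w[n - s + (s - r + j)]? := hu1 _ (by omega)
        rw [show n - 3 * s + (s - r + j) = n - 2 * s - r + j by omega,
          show n - s + (s - r + j) = n - r + j by omega] at R
        rw [L1, L2, ← R]
      obtain ⟨w', hw'⟩ := reduces_of_indices w.dropLast (n - 2 * s - r) r hr
        (by rw [hdl]; omega) H1 H2
      exact hpp w' hw'
    · -- r = s : conclude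
      have hpal : PalAt w (c - r) r := by
        refine ⟨by omega, by omega, fun k hk1 hk2 => ?_⟩
        have e1 : w[n - 3 * s + (s - k)]? = w[n - s + (s - k)]? := hu1 _ (by omega)
        rw [show n - 3 * s + (s - k) = n - 2 * s - k by omega,
          show n - s + (s - k) = n - k by omega] at e1
        have e2 : w[n - 2 * s + (k - 1)]? = w[n - k]? :=
          palAt_mirror hpd (by omega) (by omega) (by omega)
        rw [show c - r - k = n - 2 * s - k by omega,
          show c - r + k - 1 = n - 2 * s + (k - 1) by omega, e1, e2]
      exact rho_ge hpal
    · -- r > s : contradiction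
      exfalso
      rcases le_or_gt (2 * r) (3 * s) with h23 | h23
      · -- s < r, 2r ≤ 3s
        have H1 : ∀ j, j < r - s →
            w.dropLast[n - 2 * r + s + (r - s) + j]? =
              w.dropLast[n - 2 * r + s + (r - s) - 1 - j]? := by
          intro j hj
          rw [show n - 2 * r + s + (r - s) + j = n - r + j by omega,
            show n - 2 * r + s + (r - s) - 1 - j = n - r - 1 - j by omega,
            getElem?_dropLast_eq (by omega), getElem?_dropLast_eq (by omega)]
          exact palAt_mirror hP (by omega) (by omega) (by omega)
        have H2 : ∀ j, j < r - s →
            w.dropLast[n - 2 * r + s + 2 * (r - s) + j]? =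
              w.dropLast[n - 2 * r + s + j]? := by
          intro j hj
          rw [show n - 2 * r + s + 2 * (r - s) + j = n - s + j by omega,
            getElem?_dropLast_eq (by omega), getElem?_dropLast_eq (by omega)]
          have L : w[n - s + j]? = w[n - s - 1 - j]? :=
            palAt_mirror hpd (by omega) (by omega) (by omega)
          have R : w[n - s - 1 - j]? = w[n - 2 * r + s + j]? :=
            palAt_mirror hP (by omega) (by omega) (by omega)
          rw [L, R]
        obtain ⟨w', hw'⟩ := reduces_of_indices w.dropLast (n - 2 * r + s) (r - s)
          (by omega) (by rw [hdl]; omega) H1 H2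
        exact hpp w' hw'
      · -- s < r, 3s < 2r
        have H1 : ∀ j, j < s →
            w.dropLast[n - 2 * r + s + j]? = w.dropLast[n - 2 * r + s - 1 - j]? := by
          intro j hj
          rw [getElem?_dropLast_eq (by omega), getElem?_dropLast_eq (by omega)]
          have L1 : w[n - 2 * r + s + j]? = w[n - s - 1 - j]? :=
            palAt_mirror hP (by omega) (by omega) (by omega)
          have L2 : w[n - s - 1 - j]? = w[n - s + j]? :=
            palAt_mirror hpd (by omega) (by omega) (by omega)
          have R : w[n - 2 * r + s - 1 - j]? = w[n - s + j]? :=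
            palAt_mirror hP (by omega) (by omega) (by omega)
          rw [L1, L2, R]
        have H2 : ∀ j, j < s →
            w.dropLast[n - 2 * r + 2 * s + j]? = w.dropLast[n - 2 * r + j]? := by
          intro j hj
          rw [getElem?_dropLast_eq (by omega), getElem?_dropLast_eq (by omega)]
          have L1 : w[n - 2 * r + 2 * s + j]? = w[n - 2 * s - 1 - j]? :=
            palAt_mirror hP (by omega) (by omega) (by omega)
          have L2 : w[n - 3 * s + (s - 1 - j)]? = w[n - s + (s - 1 - j)]? := hu1 _ (by omega)
          rw [show n - 3 * s + (s - 1 - j) = n - 2 * s - 1 - j by omega,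
            show n - s + (s - 1 - j) = n - 1 - j by omega] at L2
          have R : w[n - 2 * r + j]? = w[n - 1 - j]? :=
            palAt_mirror hP (by omega) (by omega) (by omega)
          rw [L1, L2, R]
        obtain ⟨w', hw'⟩ := reduces_of_indices w.dropLast (n - 2 * r) s hs
          (by rw [hdl]; omega) H1 H2
        exact hpp w' hw'
  · intro hge
    refine ⟨?_, hpp⟩
    have hpal : PalAt w (c - r) r := palAt_of_le_rho hr hge
    have h2rc : 2 * r ≤ c := by have := hpal.1; omega
    have H1 : ∀ j, j < r → w[c - 2 * r + r + j]? = w[c - 2 * r + r - 1 - j]? := by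
      intro j hj
      rw [show c - 2 * r + r + j = c - r + j by omega,
        show c - 2 * r + r - 1 - j = c - r - 1 - j by omega]
      exact palAt_mirror hpal (by omega) (by omega) (by omega)
    have H2 : ∀ j, j < r → w[c - 2 * r + 2 * r + j]? = w[c - 2 * r + j]? := by
      intro j hj
      rw [show c - 2 * r + 2 * r + j = c + j by omega]
      have L : w[c + j]? = w[c - 1 - j]? :=
        palAt_mirror hP (by omega) (by omega) (by omega)
      have R : w[c - 1 - j]? = w[c - 2 * r + j]? :=
        palAt_mirror hpal (by omega) (by omega) (by omega)
      rw [L, R]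
    exact reduces_of_indices w (c - 2 * r) r hr (by omega) H1 H2
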